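/- For every integer k ≥ 1 the pairs a = (1, k − 1/2) and b = (1, k + 1/2) satisfy σ_i(a) = σ_i(b) = i for all integers i with 1 ≤ i ≤ k − 1, while σ_k(a) = k − 1/2 and σ_k(b) = k; in particular σ_k(a) ≠ σ_k(b). (Thus for every k there exist two ellipsoids whose first k−1 Ekeland–Hofer capacities agree but whose k-th Ekeland–Hofer capacities differ, so the Ekeland–Hofer capacities are functionally independent.) -/
import Mathlib

lemma ehSigma_aux (a₂ c : ℝ) (k : ℕ) (hc : 0 < c)
    (hmem : (k : ℤ) ≤ ⌊c⌋ + ⌊c / a₂⌋)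
    (hlb : ∀ t : ℝ, 0 < t → (k : ℤ) ≤ ⌊t⌋ + ⌊t / a₂⌋ → c ≤ t) :
    sInf {t : ℝ | 0 < t ∧ (k : ℤ) ≤ ⌊t / 1⌋ + ⌊t / a₂⌋} = c := by
  have hset : {t : ℝ | 0 < t ∧ (k : ℤ) ≤ ⌊t / 1⌋ + ⌊t / a₂⌋}
      = {t : ℝ | 0 < t ∧ (k : ℤ) ≤ ⌊t⌋ + ⌊t / a₂⌋} := by
    simp [div_one]
  rw [hset]
  apply le_antisymm
  · exact csInf_le ⟨c, fun t ht => hlb t ht.1 ht.2⟩ ⟨hc, hmem⟩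
  · exact le_csInf ⟨c, hc, hmem⟩ (fun t ht => hlb t ht.1 ht.2)

lemma floor_div_zero (a₂ t : ℝ) (h0 : 0 < t) (h : t < a₂) : ⌊t / a₂⌋ = 0 := by
  have ha : 0 < a₂ := lt_trans h0 h
  rw [Int.floor_eq_zero_iff]
  exact ⟨div_nonneg h0.le ha.le, (div_lt_one ha).2 h⟩

lemma ehSigma_case (a₂ : ℝ) (i : ℕ) (hi1 : 1 ≤ i) (hia : (i : ℝ) ≤ a₂) :
    sInf {t : ℝ | 0 < t ∧ (i : ℤ) ≤ ⌊t / 1⌋ + ⌊t / a₂⌋} = (i : ℝ) := by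
  have hi0 : (0 : ℝ) < i := by exact_mod_cast hi1
  apply ehSigma_aux
  · exact hi0
  · rw [Int.floor_natCast]
    have ha : 0 < a₂ := lt_of_lt_of_le hi0 hia
    have : (0:ℤ) ≤ ⌊(i:ℝ) / a₂⌋ := Int.floor_nonneg.2 (div_nonneg hi0.le ha.le)
    omega
  · intro t ht hsum
    by_contra hlt
    push_neg at hlt
    have h1 : ⌊t⌋ < (i : ℤ) := by rw [Int.floor_lt]; exact_mod_cast hlt
    have h2 : ⌊t / a₂⌋ = 0 := floor_div_zero a₂ t ht (by linarith)
    omega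

/-- `ehSigmaPair a₁ a₂ k` is the k-th smallest element (with multiplicity) of the multiset
`{m•a₁ : m ≥ 1} ∪ {m•a₂ : m ≥ 1}`, i.e. `σ_k((a₁,a₂)) = min {t > 0 : ⌊t/a₁⌋ + ⌊t/a₂⌋ ≥ k}`.
The k-th Ekeland–Hofer capacity of the ellipsoid `E(a₁,a₂)` is `π • ehSigmaPair a₁ a₂ k`. -/
noncomputable def ehSigmaPair (a₁ a₂ : ℝ) (k : ℕ) : ℝ :=
  sInf {t : ℝ | 0 < t ∧ (k : ℤ) ≤ ⌊t / a₁⌋ + ⌊t / a₂⌋}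

/-- For every `k ≥ 1`, the ellipsoids `E(1, k - 1/2)` and `E(1, k + 1/2)` have
`σ_i = i` for `1 ≤ i ≤ k - 1`, while `σ_k(E(1, k-1/2)) = k - 1/2 ≠ k = σ_k(E(1, k+1/2))`:
the Ekeland–Hofer capacities are functionally independent. -/
theorem ehCapacities_functionally_independent (k : ℕ) (hk : 1 ≤ k) :
    (∀ i : ℕ, 1 ≤ i → i ≤ k - 1 →
      ehSigmaPair 1 ((k : ℝ) - 1 / 2) i = (i : ℝ) ∧
      ehSigmaPair 1 ((k : ℝ) + 1 / 2) i = (i : ℝ)) ∧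
    ehSigmaPair 1 ((k : ℝ) - 1 / 2) k = (k : ℝ) - 1 / 2 ∧
    ehSigmaPair 1 ((k : ℝ) + 1 / 2) k = (k : ℝ) := by
  have hk1 : (1 : ℝ) ≤ (k : ℝ) := by exact_mod_cast hk
  refine ⟨?_, ?_, ?_⟩
  · intro i hi1 hik
    have hik' : (i : ℝ) ≤ (k : ℝ) - 1 := by
      have : (i : ℝ) ≤ ((k - 1 : ℕ) : ℝ) := by exact_mod_cast hik
      rwa [Nat.cast_sub hk, Nat.cast_one] at this
    exact ⟨ehSigma_case _ i hi1 (by linarith), ehSigma_case _ i hi1 (by linarith)⟩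
  · unfold ehSigmaPair
    apply ehSigma_aux
    · linarith
    · have h1 : ⌊(k:ℝ) - 1/2⌋ = (k : ℤ) - 1 := by
        rw [Int.floor_eq_iff]
        push_cast
        constructor <;> linarith
      have hne : (k:ℝ) - 1/2 ≠ 0 := by linarith
      have h2 : ((k:ℝ) - 1/2) / ((k:ℝ) - 1/2) = 1 := div_self hne
      rw [h1, h2, Int.floor_one]; omega
    · intro t ht hsum
      by_contra hlt
      push_neg at hlt
      have h1 : ⌊t⌋ < (k : ℤ) := by rw [Int.floor_lt]; push_cast; linarith
      have h2 : ⌊t / ((k:ℝ) - 1/2)⌋ = 0 := floor_div_zero _ t ht hlt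
      omega
  · exact ehSigma_case _ k hk (by linarith)
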